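/- Suppose 0 < λ < 1 and Φⱼ, Φⱼ₊₁ are real with 0 < Φⱼ ≤ 1, Φⱼ < Φⱼ₊₁ ≤ 2Φⱼ, and Φⱼ₊₁ - Φⱼ ≤ -(8/3)·log λ - (8/3)·log(cos(7Φⱼ/8)). Then for every θ ∈ ℝ: 1 - λ·exp(-(Φⱼ₊₁-Φⱼ)·(3/8)·sin θ)·cos(Φⱼ + (Φⱼ₊₁-Φⱼ)·((5/8)·cos θ + 1/2)) > 0. -/
import Mathlib

set_option maxHeartbeats 1000000 in
theorem stmt_6 (lam Φj Φj1 : ℝ) (hlam0 : 0 < lam) (hlam1 : lam < 1)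
    (hΦj0 : 0 < Φj) (hΦj1 : Φj ≤ 1) (hlt : Φj < Φj1) (hle : Φj1 ≤ 2 * Φj)
    (hstep : Φj1 - Φj ≤ -(8/3) * Real.log lam - (8/3) * Real.log (Real.cos (7 * Φj / 8)))
    (θ : ℝ) :
    1 - lam * Real.exp (-(Φj1 - Φj) * (3/8) * Real.sin θ) *
        Real.cos (Φj + (Φj1 - Φj) * ((5/8) * Real.cos θ + 1/2)) > 0 := by
  have hpi := Real.pi_gt_three
  set t := Φj1 - Φj with ht_def
  clear_value t
  have ht0 : 0 < t := by rw [ht_def]; linarith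
  have htΦ : t ≤ Φj := by rw [ht_def]; linarith
  have hc7 : 0 < Real.cos (7 * Φj / 8) := by
    apply Real.cos_pos_of_mem_Ioo
    constructor <;> [linarith; linarith]
  -- key bound: lam * exp(3t/8) * cos7 ≤ 1
  have hkey : lam * Real.exp (t * (3/8)) * Real.cos (7 * Φj / 8) ≤ 1 := by
    have h1 : t * (3/8) ≤ -Real.log lam - Real.log (Real.cos (7 * Φj / 8)) := by linarith
    have h2 : Real.exp (t * (3/8)) ≤
        Real.exp (-Real.log lam - Real.log (Real.cos (7 * Φj / 8))) := Real.exp_le_exp.2 h1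
    rw [Real.exp_sub, Real.exp_neg, Real.exp_log hlam0, Real.exp_log hc7] at h2
    have := mul_le_mul_of_nonneg_left h2 (le_of_lt hlam0)
    calc lam * Real.exp (t * (3/8)) * Real.cos (7 * Φj / 8)
        ≤ lam * (lam⁻¹ / Real.cos (7 * Φj / 8)) * Real.cos (7 * Φj / 8) := by
          exact mul_le_mul_of_nonneg_right this hc7.le
      _ = 1 := by field_simp
  set arg := Φj + t * ((5/8) * Real.cos θ + 1/2) with harg
  clear_value arg
  have hsin := Real.neg_one_le_sin θ
  have hsin' := Real.sin_le_one θ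
  have hcosθ := Real.neg_one_le_cos θ
  have hcosθ' := Real.cos_le_one θ
  have hexp_pos : 0 < Real.exp (-t * (3/8) * Real.sin θ) := Real.exp_pos _
  rcases le_or_gt (Real.cos arg) 0 with hca | hca
  · have : lam * Real.exp (-t * (3/8) * Real.sin θ) * Real.cos arg ≤ 0 := by
      apply mul_nonpos_of_nonneg_of_nonpos (by positivity) hca
    linarith
  · -- cos arg > 0
    have hexp_le : Real.exp (-t * (3/8) * Real.sin θ) ≤ Real.exp (t * (3/8)) := by
      apply Real.exp_le_exp.2; nlinarith
    have ht58 : t * (5/8 * Real.cos θ + 1/2) ≤ t * (9/8) := by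
      apply mul_le_mul_of_nonneg_left (by linarith) ht0.le
    have ht58' : t * (-(1/8)) ≤ t * (5/8 * Real.cos θ + 1/2) := by
      apply mul_le_mul_of_nonneg_left (by linarith) ht0.le
    have harg_le : arg ≤ Real.pi := by rw [harg]; nlinarith
    have harg_ge : 7 * Φj / 8 ≤ arg := by rw [harg]; nlinarith
    have hA : lam * Real.exp (-t * (3/8) * Real.sin θ) * Real.cos arg < 1 := by
      rcases eq_or_lt_of_le hsin with hs1 | hs1
      · -- sin θ = -1, so cos θ = 0
        have hcos0 : Real.cos θ = 0 := by
          have := Real.sin_sq_add_cos_sq θ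
          nlinarith
        have hargval : arg = Φj + t * (1/2) := by rw [harg, hcos0]; ring
        have hlt7 : Real.cos arg < Real.cos (7 * Φj / 8) := by
          apply Real.cos_lt_cos_of_nonneg_of_le_pi (by linarith) harg_le
          rw [hargval]; linarith
        have hexp_eq : Real.exp (-t * (3/8) * Real.sin θ) = Real.exp (t * (3/8)) := by
          rw [← hs1]; ring_nf
        rw [hexp_eq]
        have : lam * Real.exp (t * (3/8)) * Real.cos arg <
            lam * Real.exp (t * (3/8)) * Real.cos (7 * Φj / 8) := by
          have hx : 0 < lam * Real.exp (t * (3/8)) := by positivity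
          exact mul_lt_mul_of_pos_left hlt7 hx
        linarith
      · -- sin θ > -1 : exp strict
        have hexp_lt : Real.exp (-t * (3/8) * Real.sin θ) < Real.exp (t * (3/8)) := by
          apply Real.exp_lt_exp.2
          nlinarith [mul_lt_mul_of_pos_left hs1 ht0]
        have hle7 : Real.cos arg ≤ Real.cos (7 * Φj / 8) := by
          exact Real.cos_le_cos_of_nonneg_of_le_pi (by linarith) harg_le harg_ge
        have h1 : lam * Real.exp (-t * (3/8) * Real.sin θ) * Real.cos arg <
            lam * Real.exp (t * (3/8)) * Real.cos arg := by
          exact mul_lt_mul_of_pos_right (mul_lt_mul_of_pos_left hexp_lt hlam0) hca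
        have h2 : lam * Real.exp (t * (3/8)) * Real.cos arg ≤
            lam * Real.exp (t * (3/8)) * Real.cos (7 * Φj / 8) := by
          have hx : 0 < lam * Real.exp (t * (3/8)) := by positivity
          exact mul_le_mul_of_nonneg_left hle7 hx.le
        linarith
    linarith
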